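/- For every set F ⊆ ℝ^d, the limit superior of the Assouad spectrum as θ → 0⁺ equals the limit of the upper spectrum as θ → 0⁺; that is, limsup_{θ→0⁺} dim_A^θ F = lim_{θ→0⁺} \overline{dim}_A^θ F (in particular the latter limit exists). -/

import Mathlib

open Filter Metric Set Topology Bornology ENNReal

noncomputable section

variable {X : Type*} [PseudoMetricSpace X]

/-- `coveringNumber r E` is the smallest number of closed balls of radius `r`
needed to cover `E` (with value `⊤` if no finite cover exists). -/
def coveringNumber (r : ℝ) (E : Set X) : ℕ∞ :=
  sInf {n : ℕ∞ | ∃ t : Finset X, (E ⊆ ⋃ x ∈ t, closedBall x r) ∧ (t.card : ℕ∞) = n}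

/-- The Assouad spectrum `dim_A^θ F`. -/
def assouadSpectrum (θ : ℝ) (F : Set X) : ℝ :=
  sInf {s : ℝ | 0 ≤ s ∧ ∃ C > (0 : ℝ), ∀ R : ℝ, 0 < R → R < 1 → ∀ x ∈ F,
    (coveringNumber (R ^ (1 / θ)) (closedBall x R ∩ F) : ℝ≥0∞)
      ≤ ENNReal.ofReal (C * (R / R ^ (1 / θ)) ^ s)}

/-- The upper spectrum `\overline{dim}_A^θ F`. -/
def upperSpectrum (θ : ℝ) (F : Set X) : ℝ :=
  sInf {s : ℝ | 0 ≤ s ∧ ∃ C > (0 : ℝ), ∀ r R : ℝ, 0 < r → r ≤ R ^ (1 / θ) →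
    R ^ (1 / θ) < R → R < 1 → 0 < R → ∀ x ∈ F,
    (coveringNumber r (closedBall x R ∩ F) : ℝ≥0∞) ≤ ENNReal.ofReal (C * (R / r) ^ s)}

/-- The generalized upper box dimension `\overline{dim}_{GB} F := limsup_{θ → 0⁺} dim_A^θ F`. -/
def genUpperBoxDim (F : Set X) : ℝ :=
  limsup (fun θ : ℝ => assouadSpectrum θ F) (𝓝[>] (0 : ℝ))

/-- The quasi-Assouad dimension `dim_{qA} F := lim_{θ → 1⁻} \overline{dim}_A^θ F`
(the limit exists by monotonicity, hence equals the limsup). -/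
def quasiAssouadDim (F : Set X) : ℝ :=
  limsup (fun θ : ℝ => upperSpectrum θ F) (𝓝[<] (1 : ℝ))

/-- The upper box dimension `\overline{dim}_B F := limsup_{δ → 0⁺} log N_δ(F) / (- log δ)`. -/
def upperBoxDim (F : Set X) : ℝ :=
  limsup (fun δ : ℝ => Real.log ((coveringNumber δ F).toNat : ℝ) / (- Real.log δ))
    (𝓝[>] (0 : ℝ))

/-- The Assouad dimension `dim_A F`. -/
def assouadDim (F : Set X) : ℝ :=
  sInf {s : ℝ | 0 ≤ s ∧ ∃ C > (0 : ℝ), ∃ ρ > (0 : ℝ), ∀ r R : ℝ, 0 < r → r < R → R < ρ →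
    ∀ x ∈ F, (coveringNumber r (closedBall x R ∩ F) : ℝ≥0∞) ≤ ENNReal.ofReal (C * (R / r) ^ s)}

/-- The packing pre-measure at scale `δ`: the supremum of `∑ |B_i|^s` over at most countable
collections of disjoint closed balls of radii at most `δ` (and positive) with centres in `F`,
where `|B_i| = 2 r_i` is the diameter. -/
def packingPre (s δ : ℝ) (F : Set X) : ℝ≥0∞ :=
  ⨆ (D : Set (X × ℝ)) (_ : D.Countable)
    (_ : ∀ p ∈ D, p.1 ∈ F ∧ 0 < p.2 ∧ p.2 ≤ δ)
    (_ : D.Pairwise fun p q => Disjoint (closedBall p.1 p.2) (closedBall q.1 q.2)),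
    ∑' p : D, ENNReal.ofReal ((2 * (p : X × ℝ).2) ^ s)

/-- `𝒫₀^s(F) := lim_{δ → 0} 𝒫_δ^s(F)`; the limit exists by monotonicity and equals the inf. -/
def packingPre₀ (s : ℝ) (F : Set X) : ℝ≥0∞ :=
  ⨅ (δ : ℝ) (_ : 0 < δ), packingPre s δ F

/-- The packing (outer) measure `𝒫^s(F)`. -/
def packingMeasure (s : ℝ) (F : Set X) : ℝ≥0∞ :=
  ⨅ (G : ℕ → Set X) (_ : F ⊆ ⋃ i, G i), ∑' i, packingPre₀ s (G i)

/-- The packing dimension `dim_P F = inf {s ≥ 0 : 𝒫^s(F) = 0}`. -/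
def packingDim (F : Set X) : ℝ :=
  sInf {s : ℝ | 0 ≤ s ∧ packingMeasure s F = 0}


section AuxProofs

open MeasureTheory

variable {X : Type*} [PseudoMetricSpace X]

private lemma aux_covNum_le_card {r : ℝ} {E : Set X} {t : Finset X}
    (h : E ⊆ ⋃ x ∈ t, closedBall x r) : coveringNumber r E ≤ t.card :=
  sInf_le ⟨t, h, rfl⟩

private lemma aux_covNum_exists {r : ℝ} {E : Set X} (h : coveringNumber r E ≠ ⊤) :
    ∃ t : Finset X, (E ⊆ ⋃ x ∈ t, closedBall x r) ∧ (t.card : ℕ∞) = coveringNumber r E := by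
  have hne : {n : ℕ∞ | ∃ t : Finset X, (E ⊆ ⋃ x ∈ t, closedBall x r) ∧
      (t.card : ℕ∞) = n}.Nonempty := by
    by_contra hcon
    rw [Set.not_nonempty_iff_eq_empty] at hcon
    apply h
    unfold _root_.coveringNumber
    rw [hcon, sInf_empty]
  obtain ⟨t, ht, hct⟩ := csInf_mem hne
  exact ⟨t, ht, hct⟩

private lemma aux_covNum_mono {r : ℝ} {E E' : Set X} (h : E ⊆ E') :
    coveringNumber r E ≤ coveringNumber r E' := by
  rcases eq_or_ne (coveringNumber r E') ⊤ with h' | h'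
  · rw [h']; exact le_top
  · obtain ⟨t, ht, hct⟩ := aux_covNum_exists h'
    exact hct ▸ aux_covNum_le_card (h.trans ht)

private lemma aux_covNum_biUnion {ι : Type*} {r : ℝ} (t : Finset ι) (E : ι → Set X) {B : ℝ≥0∞}
    (hB : B ≠ ⊤) (h : ∀ z ∈ t, (coveringNumber r (E z) : ℝ≥0∞) ≤ B) :
    (coveringNumber r (⋃ z ∈ t, E z) : ℝ≥0∞) ≤ t.card * B := by
  classical
  have hnt : ∀ z ∈ t, coveringNumber r (E z) ≠ ⊤ := by
    intro z hz hcon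
    have := h z hz
    rw [hcon, ENat.toENNReal_top, top_le_iff] at this
    exact hB this
  choose! u hu hcu using fun z (hz : z ∈ t) => aux_covNum_exists (hnt z hz)
  have hcover : (⋃ z ∈ t, E z) ⊆ ⋃ x ∈ t.biUnion u, closedBall x r := by
    intro e he
    rw [Set.mem_iUnion₂] at he
    obtain ⟨z, hz, hez⟩ := he
    have := hu z hz hez
    rw [Set.mem_iUnion₂] at this
    obtain ⟨y, hy, hey⟩ := this
    exact Set.mem_iUnion₂.mpr ⟨y, Finset.mem_biUnion.mpr ⟨z, hz, hy⟩, hey⟩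
  calc (coveringNumber r (⋃ z ∈ t, E z) : ℝ≥0∞)
      ≤ (((t.biUnion u).card : ℕ∞) : ℝ≥0∞) :=
        ENat.toENNReal_le.mpr (aux_covNum_le_card hcover)
    _ = ((t.biUnion u).card : ℝ≥0∞) := by rw [ENat.toENNReal_coe]
    _ ≤ ((∑ z ∈ t, (u z).card : ℕ) : ℝ≥0∞) := by
        exact_mod_cast Nat.cast_le.mpr Finset.card_biUnion_le
    _ = ∑ z ∈ t, ((u z).card : ℝ≥0∞) := by push_cast; rfl
    _ ≤ ∑ z ∈ t, B := by
        refine Finset.sum_le_sum fun z hz => ?_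
        have : (((u z).card : ℕ∞) : ℝ≥0∞) = (coveringNumber r (E z) : ℝ≥0∞) := by
          rw [hcu z hz]
        rw [← ENat.toENNReal_coe]
        exact this.le.trans (h z hz)
    _ = t.card * B := by rw [Finset.sum_const, nsmul_eq_mul]

private lemma aux_exists_cover {d : ℕ} {x : EuclideanSpace ℝ (Fin d)} {R r : ℝ}
    (hr : 0 < r) (hrR : r ≤ R) {E : Set (EuclideanSpace ℝ (Fin d))} (hE : E ⊆ closedBall x R) :
    ∃ t : Finset (EuclideanSpace ℝ (Fin d)), ↑t ⊆ E ∧ (E ⊆ ⋃ y ∈ t, closedBall y r) ∧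
      (t.card : ℝ) ≤ (3 * (R / r)) ^ d := by
  classical
  set μ : Measure (EuclideanSpace ℝ (Fin d)) := volume with hμdef
  have hμball : μ (ball 0 1) ≠ 0 := (measure_ball_pos μ _ one_pos).ne'
  have hμball' : μ (ball 0 1) ≠ ⊤ := measure_ball_lt_top.ne
  have hball : ∀ (y : EuclideanSpace ℝ (Fin d)) (ρ : ℝ), 0 ≤ ρ →
      μ (closedBall y ρ) = ENNReal.ofReal (ρ ^ d) * μ (ball 0 1) := by
    intro y ρ hρ
    rw [Measure.addHaar_closedBall μ y hρ, finrank_euclideanSpace_fin]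
  have key : ∀ t : Finset (EuclideanSpace ℝ (Fin d)), ↑t ⊆ E →
      ((t : Set (EuclideanSpace ℝ (Fin d))).Pairwise fun y z => r < dist y z) →
      (t.card : ℝ) ≤ (3 * (R / r)) ^ d := by
    intro t htE hsep
    have hdisj : (↑t : Set (EuclideanSpace ℝ (Fin d))).PairwiseDisjoint
        fun y => closedBall y (r / 2) := by
      intro y hy z hz hyz
      exact closedBall_disjoint_closedBall (by linarith [hsep hy hz hyz])
    have hsum : ∑ y ∈ t, μ (closedBall y (r / 2)) = μ (⋃ y ∈ t, closedBall y (r / 2)) :=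
      (measure_biUnion_finset hdisj fun y _ => measurableSet_closedBall).symm
    have hsub : (⋃ y ∈ t, closedBall y (r / 2)) ⊆ closedBall x (R + r / 2) := by
      refine Set.iUnion₂_subset fun y hy => closedBall_subset_closedBall' ?_
      have := hE (htE hy)
      rw [mem_closedBall] at this
      linarith
    have hineq : ((t.card : ℝ≥0∞) * ENNReal.ofReal ((r / 2) ^ d)) * μ (ball 0 1)
        ≤ ENNReal.ofReal ((R + r / 2) ^ d) * μ (ball 0 1) := by
      calc ((t.card : ℝ≥0∞) * ENNReal.ofReal ((r / 2) ^ d)) * μ (ball 0 1)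
          = ∑ y ∈ t, μ (closedBall y (r / 2)) := by
            rw [Finset.sum_congr rfl fun y _ => hball y (r / 2) (by linarith),
              Finset.sum_const, nsmul_eq_mul, mul_assoc]
        _ = μ (⋃ y ∈ t, closedBall y (r / 2)) := hsum
        _ ≤ μ (closedBall x (R + r / 2)) := measure_mono hsub
        _ = ENNReal.ofReal ((R + r / 2) ^ d) * μ (ball 0 1) := hball x _ (by linarith)
    have h2 : (t.card : ℝ≥0∞) * ENNReal.ofReal ((r / 2) ^ d)
        ≤ ENNReal.ofReal ((R + r / 2) ^ d) :=
      (ENNReal.mul_le_mul_iff_left hμball hμball').mp hineq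
    have h3 : (t.card : ℝ) * (r / 2) ^ d ≤ (R + r / 2) ^ d := by
      rw [← ENNReal.ofReal_natCast, ← ENNReal.ofReal_mul (by positivity)] at h2
      exact (ENNReal.ofReal_le_ofReal_iff (pow_nonneg (by linarith) d)).mp h2
    have h4 : (0 : ℝ) < (r / 2) ^ d := by positivity
    have heq : 3 * (R / r) * (r / 2) = 3 * R / 2 := by
      field_simp
    have h5 : (R + r / 2) ^ d ≤ (3 * (R / r) * (r / 2)) ^ d := by
      rw [heq]
      exact pow_le_pow_left₀ (by linarith) (by linarith) d
    rw [mul_pow] at h5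
    exact le_of_mul_le_mul_right (h3.trans h5) h4
  set S : Set ℕ := {n | ∃ t : Finset (EuclideanSpace ℝ (Fin d)),
    (↑t ⊆ E ∧ (t : Set (EuclideanSpace ℝ (Fin d))).Pairwise fun y z => r < dist y z) ∧
      t.card = n} with hSdef
  have hS0 : 0 ∈ S := ⟨∅, ⟨by simp, by simp⟩, by simp⟩
  have hSb : BddAbove S := by
    refine ⟨⌈(3 * (R / r)) ^ d⌉₊, fun n hn => ?_⟩
    obtain ⟨t, ⟨h1, h2⟩, rfl⟩ := hn
    have := (key t h1 h2).trans (Nat.le_ceil _)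
    exact_mod_cast this
  obtain ⟨t, ⟨htE, hsep⟩, hcard⟩ := Nat.sSup_mem ⟨0, hS0⟩ hSb
  refine ⟨t, htE, ?_, key t htE hsep⟩
  intro e he
  by_contra hcon
  rw [Set.mem_iUnion₂] at hcon
  push_neg at hcon
  have hfar : ∀ y ∈ t, r < dist e y := by
    intro y hy
    have := hcon y hy
    rw [mem_closedBall] at this
    linarith [lt_of_not_ge this]
  have hnotmem : e ∉ t := by
    intro hmem
    have := hfar e hmem
    simp only [dist_self] at this
    linarith
  have hins : (insert e t).card ∈ S := by
    refine ⟨insert e t, ⟨?_, ?_⟩, rfl⟩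
    · rw [Finset.coe_insert]
      exact Set.insert_subset he htE
    · rw [Finset.coe_insert]
      rw [Set.pairwise_insert]
      exact ⟨hsep, fun z hz _ => ⟨hfar z hz, by rw [dist_comm]; exact hfar z hz⟩⟩
  have hle : (insert e t).card ≤ sSup S := le_csSup hSb hins
  rw [Finset.card_insert_of_notMem hnotmem, ← hcard] at hle
  omega

end AuxProofs


section AuxSpectrum

private lemma aux_d_mem_upper {d : ℕ} (F : Set (EuclideanSpace ℝ (Fin d))) (θ : ℝ) :
    ((d : ℕ) : ℝ) ∈ {s : ℝ | 0 ≤ s ∧ ∃ C > (0 : ℝ), ∀ r R : ℝ, 0 < r → r ≤ R ^ (1 / θ) →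
      R ^ (1 / θ) < R → R < 1 → 0 < R → ∀ x ∈ F,
      (coveringNumber r (closedBall x R ∩ F) : ℝ≥0∞) ≤ ENNReal.ofReal (C * (R / r) ^ s)} := by
  refine ⟨Nat.cast_nonneg d, 3 ^ d, by positivity, fun r R hr hrle hRθ hR1 hR0 x hx => ?_⟩
  have hrR : r < R := lt_of_le_of_lt hrle hRθ
  obtain ⟨t, -, hcov, hcard⟩ := aux_exists_cover hr hrR.le
    (Set.inter_subset_left : closedBall x R ∩ F ⊆ closedBall x R)
  calc (coveringNumber r (closedBall x R ∩ F) : ℝ≥0∞)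
      ≤ ((t.card : ℕ∞) : ℝ≥0∞) := ENat.toENNReal_le.mpr (aux_covNum_le_card hcov)
    _ = ENNReal.ofReal (t.card : ℝ) := by rw [ENat.toENNReal_coe, ENNReal.ofReal_natCast]
    _ ≤ ENNReal.ofReal ((3 * (R / r)) ^ d) := ENNReal.ofReal_le_ofReal hcard
    _ = ENNReal.ofReal (3 ^ d * (R / r) ^ ((d : ℕ) : ℝ)) := by
        rw [mul_pow, Real.rpow_natCast]

private lemma aux_d_mem_assouad {d : ℕ} (F : Set (EuclideanSpace ℝ (Fin d))) {θ : ℝ}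
    (hθ0 : 0 < θ) (hθ1 : θ < 1) :
    ((d : ℕ) : ℝ) ∈ {s : ℝ | 0 ≤ s ∧ ∃ C > (0 : ℝ), ∀ R : ℝ, 0 < R → R < 1 → ∀ x ∈ F,
      (coveringNumber (R ^ (1 / θ)) (closedBall x R ∩ F) : ℝ≥0∞)
        ≤ ENNReal.ofReal (C * (R / R ^ (1 / θ)) ^ s)} := by
  refine ⟨Nat.cast_nonneg d, 3 ^ d, by positivity, fun R hR0 hR1 x hx => ?_⟩
  have hrpos : 0 < R ^ (1 / θ) := Real.rpow_pos_of_pos hR0 _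
  have hrR : R ^ (1 / θ) < R := by
    nth_rewrite 2 [← Real.rpow_one R]
    exact Real.rpow_lt_rpow_of_exponent_gt hR0 hR1 (one_lt_one_div hθ0 hθ1)
  obtain ⟨t, -, hcov, hcard⟩ := aux_exists_cover hrpos hrR.le
    (Set.inter_subset_left : closedBall x R ∩ F ⊆ closedBall x R)
  calc (coveringNumber (R ^ (1 / θ)) (closedBall x R ∩ F) : ℝ≥0∞)
      ≤ ((t.card : ℕ∞) : ℝ≥0∞) := ENat.toENNReal_le.mpr (aux_covNum_le_card hcov)
    _ = ENNReal.ofReal (t.card : ℝ) := by rw [ENat.toENNReal_coe, ENNReal.ofReal_natCast]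
    _ ≤ ENNReal.ofReal ((3 * (R / R ^ (1 / θ))) ^ d) := ENNReal.ofReal_le_ofReal hcard
    _ = ENNReal.ofReal (3 ^ d * (R / R ^ (1 / θ)) ^ ((d : ℕ) : ℝ)) := by
        rw [mul_pow, Real.rpow_natCast]

private lemma aux_assouad_le_upper {d : ℕ} (F : Set (EuclideanSpace ℝ (Fin d))) {θ : ℝ}
    (hθ0 : 0 < θ) (hθ1 : θ < 1) : assouadSpectrum θ F ≤ upperSpectrum θ F := by
  unfold assouadSpectrum upperSpectrum
  refine csInf_le_csInf ⟨0, fun b hb => hb.1⟩ ⟨((d : ℕ) : ℝ), aux_d_mem_upper F θ⟩ ?_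
  rintro s ⟨hs0, C, hC, h⟩
  refine ⟨hs0, C, hC, fun R hR0 hR1 x hx => ?_⟩
  have hrpos : 0 < R ^ (1 / θ) := Real.rpow_pos_of_pos hR0 _
  have hrR : R ^ (1 / θ) < R := by
    nth_rewrite 2 [← Real.rpow_one R]
    exact Real.rpow_lt_rpow_of_exponent_gt hR0 hR1 (one_lt_one_div hθ0 hθ1)
  exact h (R ^ (1 / θ)) R hrpos le_rfl hrR hR1 hR0 x hx

private lemma aux_upper_mono {d : ℕ} (F : Set (EuclideanSpace ℝ (Fin d))) {θ θ' : ℝ}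
    (hθ0 : 0 < θ) (hθθ' : θ ≤ θ') (hθ'1 : θ' < 1) :
    upperSpectrum θ F ≤ upperSpectrum θ' F := by
  unfold upperSpectrum
  refine csInf_le_csInf ⟨0, fun b hb => hb.1⟩ ⟨((d : ℕ) : ℝ), aux_d_mem_upper F θ'⟩ ?_
  rintro s ⟨hs0, C, hC, h⟩
  refine ⟨hs0, C, hC, fun r R hr hrle hRθ hR1 hR0 x hx => ?_⟩
  have hθ'0 : 0 < θ' := lt_of_lt_of_le hθ0 hθθ'
  have h1 : R ^ (1 / θ) ≤ R ^ (1 / θ') :=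
    Real.rpow_le_rpow_of_exponent_ge hR0 hR1.le (one_div_le_one_div_of_le hθ0 hθθ')
  have h2 : R ^ (1 / θ') < R := by
    nth_rewrite 2 [← Real.rpow_one R]
    exact Real.rpow_lt_rpow_of_exponent_gt hR0 hR1 (one_lt_one_div hθ'0 hθ'1)
  exact h r R hr (hrle.trans h1) h2 hR1 hR0 x hx

private lemma aux_upper_le {d : ℕ} (F : Set (EuclideanSpace ℝ (Fin d))) {t s' θ₁ C : ℝ}
    (ht0 : 0 ≤ t) (hts' : t ≤ s') (hθ₁0 : 0 < θ₁) (hθ₁1 : θ₁ < 1)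
    (hkey : (((d : ℕ) : ℝ) - s') * θ₁ ≤ (s' - t) * (1 - θ₁)) (hC : 0 < C)
    (hmem : ∀ R : ℝ, 0 < R → R < 1 → ∀ x ∈ F,
      (coveringNumber (R ^ (1 / θ₁)) (closedBall x R ∩ F) : ℝ≥0∞)
        ≤ ENNReal.ofReal (C * (R / R ^ (1 / θ₁)) ^ t))
    {θ : ℝ} (hθ0 : 0 < θ) (hθθ₁ : θ ≤ θ₁) :
    upperSpectrum θ F ≤ s' := by
  have hs'0 : 0 ≤ s' := ht0.trans hts'
  unfold upperSpectrum
  refine csInf_le ⟨0, fun b hb => hb.1⟩ ⟨hs'0, 3 ^ d * C, by positivity,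
    fun r R hr hrle hRθ hR1 hR0 x hx => ?_⟩
  have hr1 : r < 1 := (hrle.trans_lt hRθ).trans hR1
  have hRθ₁ : R ^ (1 / θ) ≤ R ^ (1 / θ₁) :=
    Real.rpow_le_rpow_of_exponent_ge hR0 hR1.le (one_div_le_one_div_of_le hθ0 hθθ₁)
  have hrRθ₁ : r ≤ R ^ (1 / θ₁) := hrle.trans hRθ₁
  set Rt := r ^ θ₁ with hRtdef
  have hRt0 : 0 < Rt := Real.rpow_pos_of_pos hr _
  have hRt1 : Rt < 1 := Real.rpow_lt_one hr.le hr1 hθ₁0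
  have hRtR : Rt ≤ R := by
    have h1 : r ^ θ₁ ≤ (R ^ (1 / θ₁)) ^ θ₁ := Real.rpow_le_rpow hr.le hrRθ₁ hθ₁0.le
    rwa [← Real.rpow_mul hR0.le, one_div_mul_cancel hθ₁0.ne', Real.rpow_one] at h1
  have hRtr : Rt ^ (1 / θ₁) = r := by
    rw [hRtdef, ← Real.rpow_mul hr.le, mul_one_div_cancel hθ₁0.ne', Real.rpow_one]
  obtain ⟨tc, htcE, hcov, hcard⟩ := aux_exists_cover hRt0 hRtR
    (Set.inter_subset_left : closedBall x R ∩ F ⊆ closedBall x R)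
  have hpiece : ∀ y ∈ tc, (coveringNumber r (closedBall y Rt ∩ F) : ℝ≥0∞)
      ≤ ENNReal.ofReal (C * (Rt / r) ^ t) := by
    intro y hy
    have hyF : y ∈ F := (htcE hy).2
    have h := hmem Rt hRt0 hRt1 y hyF
    rwa [hRtr] at h
  have hsub : closedBall x R ∩ F ⊆ ⋃ y ∈ tc, (closedBall y Rt ∩ F) := by
    rintro e ⟨heB, heF⟩
    obtain ⟨y, hy, hey⟩ := Set.mem_iUnion₂.mp (hcov ⟨heB, heF⟩)
    exact Set.mem_iUnion₂.mpr ⟨y, hy, hey, heF⟩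
  have hmain : (coveringNumber r (closedBall x R ∩ F) : ℝ≥0∞)
      ≤ (tc.card : ℝ≥0∞) * ENNReal.ofReal (C * (Rt / r) ^ t) := by
    refine le_trans (ENat.toENNReal_le.mpr (aux_covNum_mono hsub)) ?_
    exact aux_covNum_biUnion tc _ ENNReal.ofReal_ne_top hpiece
  have hRr : 0 < R / r := by positivity
  have hRRt : 0 < R / Rt := by positivity
  have hRtr' : 0 < Rt / r := by positivity
  have hexp : (R / Rt) ^ ((d : ℕ) : ℝ) * (Rt / r) ^ t ≤ (R / r) ^ s' := by
    rw [← Real.log_le_log_iff (by positivity) (Real.rpow_pos_of_pos hRr _)]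
    rw [Real.log_mul (ne_of_gt (Real.rpow_pos_of_pos hRRt _))
      (ne_of_gt (Real.rpow_pos_of_pos hRtr' _)),
      Real.log_rpow hRRt, Real.log_rpow hRtr', Real.log_rpow hRr,
      Real.log_div hR0.ne' hRt0.ne', Real.log_div hRt0.ne' hr.ne',
      Real.log_div hR0.ne' hr.ne', hRtdef, Real.log_rpow hr]
    have hlr : Real.log r < 0 := Real.log_neg hr hr1
    have hlR : Real.log R < 0 := Real.log_neg hR0 hR1
    have ha : 0 ≤ Real.log R - θ₁ * Real.log r := by
      have h := (Real.log_le_log_iff hRt0 hR0).mpr hRtR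
      rw [hRtdef, Real.log_rpow hr] at h
      linarith
    have hb : (0 : ℝ) ≤ θ₁ * Real.log r - Real.log r := by nlinarith
    rcases le_or_gt ((d : ℕ) : ℝ) s' with hds' | hds'
    · nlinarith [mul_le_mul_of_nonneg_right hds' ha, mul_le_mul_of_nonneg_right hts' hb]
    · have h1 : (((d : ℕ) : ℝ) - s') * (Real.log R - θ₁ * Real.log r)
          ≤ (((d : ℕ) : ℝ) - s') * (θ₁ * (-Real.log r)) :=
        mul_le_mul_of_nonneg_left (by linarith) (by linarith)
      have h2 : (((d : ℕ) : ℝ) - s') * (θ₁ * (-Real.log r))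
          ≤ (s' - t) * ((1 - θ₁) * (-Real.log r)) := by
        rw [← mul_assoc, ← mul_assoc]
        exact mul_le_mul_of_nonneg_right hkey (by linarith)
      nlinarith [mul_le_mul_of_nonneg_right hts' hb]
  have hreal : (3 * (R / Rt)) ^ d * (C * (Rt / r) ^ t) ≤ 3 ^ d * C * (R / r) ^ s' := by
    calc (3 * (R / Rt)) ^ d * (C * (Rt / r) ^ t)
        = 3 ^ d * C * ((R / Rt) ^ ((d : ℕ) : ℝ) * (Rt / r) ^ t) := by
          rw [mul_pow, Real.rpow_natCast]; ring
      _ ≤ 3 ^ d * C * (R / r) ^ s' := mul_le_mul_of_nonneg_left hexp (by positivity)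
  calc (coveringNumber r (closedBall x R ∩ F) : ℝ≥0∞)
      ≤ (tc.card : ℝ≥0∞) * ENNReal.ofReal (C * (Rt / r) ^ t) := hmain
    _ ≤ ENNReal.ofReal ((3 * (R / Rt)) ^ d) * ENNReal.ofReal (C * (Rt / r) ^ t) := by
        refine mul_le_mul_left ?_ _
        rw [← ENNReal.ofReal_natCast]
        exact ENNReal.ofReal_le_ofReal hcard
    _ = ENNReal.ofReal ((3 * (R / Rt)) ^ d * (C * (Rt / r) ^ t)) :=
        (ENNReal.ofReal_mul (by positivity)).symm
    _ ≤ ENNReal.ofReal (3 ^ d * C * (R / r) ^ s') := ENNReal.ofReal_le_ofReal hreal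

end AuxSpectrum


/-- For every `F ⊆ ℝ^d`, `limsup_{θ→0⁺} dim_A^θ F = lim_{θ→0⁺} \overline{dim}_A^θ F`
(in particular the latter limit exists). -/
theorem upperSpectrum_tendsto_limsup_assouadSpectrum
    (d : ℕ) (F : Set (EuclideanSpace ℝ (Fin d))) :
    Tendsto (fun θ : ℝ => upperSpectrum θ F) (𝓝[>] (0 : ℝ))
      (𝓝 (limsup (fun θ : ℝ => assouadSpectrum θ F) (𝓝[>] (0 : ℝ)))) := by
  set L := limsup (fun θ : ℝ => assouadSpectrum θ F) (𝓝[>] (0 : ℝ)) with hLdef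
  have hIoo : Set.Ioo (0 : ℝ) 1 ∈ 𝓝[>] (0 : ℝ) :=
    Ioo_mem_nhdsGT_of_mem ⟨le_refl 0, one_pos⟩
  have hbdd : IsBoundedUnder (· ≤ ·) (𝓝[>] (0 : ℝ)) (fun θ => assouadSpectrum θ F) :=
    ⟨((d : ℕ) : ℝ), eventually_map.mpr (eventually_of_mem hIoo fun θ hθ =>
      csInf_le ⟨0, fun b hb => hb.1⟩ (aux_d_mem_assouad F hθ.1 hθ.2))⟩
  have hcob : IsCoboundedUnder (· ≤ ·) (𝓝[>] (0 : ℝ)) (fun θ => assouadSpectrum θ F) :=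
    isCoboundedUnder_le_of_eventually_le _ (eventually_of_mem hIoo fun θ hθ =>
      le_csInf ⟨((d : ℕ) : ℝ), aux_d_mem_assouad F hθ.1 hθ.2⟩ fun b hb => hb.1)
  have hlow : ∀ θ : ℝ, 0 < θ → θ < 1 → L ≤ upperSpectrum θ F := by
    intro θ h0 h1
    rw [hLdef]
    refine limsup_le_of_le hcob ?_
    refine eventually_of_mem (Ioo_mem_nhdsGT_of_mem ⟨le_refl 0, h0⟩) fun θ' hθ' => ?_
    calc assouadSpectrum θ' F ≤ upperSpectrum θ' F :=
          aux_assouad_le_upper F hθ'.1 (hθ'.2.trans h1)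
      _ ≤ upperSpectrum θ F := aux_upper_mono F hθ'.1 hθ'.2.le h1
  rw [tendsto_order]
  constructor
  · intro c hc
    exact eventually_of_mem hIoo fun θ hθ => lt_of_lt_of_le hc (hlow θ hθ.1 hθ.2)
  · intro c hc
    set s' : ℝ := (L + c) / 2 with hs'def
    set s₀ : ℝ := (L + s') / 2 with hs₀def
    have hLs₀ : L < s₀ := by rw [hs₀def, hs'def]; linarith
    have hs₀s' : s₀ < s' := by rw [hs₀def, hs'def]; linarith
    have hs'c : s' < c := by rw [hs'def]; linarith
    have hev : ∀ᶠ θ₁ in 𝓝[>] (0 : ℝ), assouadSpectrum θ₁ F < s₀ := by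
      refine eventually_lt_of_limsup_lt ?_ hbdd
      rw [← hLdef]
      exact hLs₀
    set δ : ℝ := min (1 / 2) ((s' - s₀) / (2 * (((d : ℕ) : ℝ) + 1))) with hδdef
    have hδ0 : 0 < δ := lt_min (by norm_num) (div_pos (by linarith) (by positivity))
    obtain ⟨θ₁, hθ₁lt, hθ₁mem⟩ :=
      (hev.and (eventually_of_mem (Ioo_mem_nhdsGT_of_mem ⟨le_refl 0, hδ0⟩)
        (fun a ha => ha))).exists
    have hθ₁0 : 0 < θ₁ := hθ₁mem.1
    have hθ₁δ : θ₁ < δ := hθ₁mem.2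
    have hθ₁half : θ₁ ≤ 1 / 2 := le_of_lt (lt_of_lt_of_le hθ₁δ (min_le_left _ _))
    have hθ₁1 : θ₁ < 1 := lt_of_le_of_lt hθ₁half (by norm_num)
    have hL0 : 0 ≤ L := by
      rw [hLdef]
      refine le_limsup_of_frequently_le ?_ hbdd
      exact (eventually_of_mem hIoo fun θ hθ =>
        le_csInf ⟨((d : ℕ) : ℝ), aux_d_mem_assouad F hθ.1 hθ.2⟩ fun b hb => hb.1).frequently
    have hs'0 : 0 ≤ s' := by rw [hs'def]; linarith
    obtain ⟨tt, httmem, htts₀⟩ : ∃ a ∈ {s : ℝ | 0 ≤ s ∧ ∃ C > (0 : ℝ), ∀ R : ℝ, 0 < R → R < 1 →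
        ∀ x ∈ F, (coveringNumber (R ^ (1 / θ₁)) (closedBall x R ∩ F) : ℝ≥0∞)
          ≤ ENNReal.ofReal (C * (R / R ^ (1 / θ₁)) ^ s)}, a < s₀ := by
      refine exists_lt_of_csInf_lt ⟨((d : ℕ) : ℝ), aux_d_mem_assouad F hθ₁0 hθ₁1⟩ ?_
      exact hθ₁lt
    obtain ⟨htt0, C, hC, hmem⟩ := httmem
    have hkey : (((d : ℕ) : ℝ) - s') * θ₁ ≤ (s' - tt) * (1 - θ₁) := by
      have hδ2 : θ₁ ≤ (s' - s₀) / (2 * (((d : ℕ) : ℝ) + 1)) :=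
        le_of_lt (lt_of_lt_of_le hθ₁δ (min_le_right _ _))
      have hd0 : (0 : ℝ) ≤ ((d : ℕ) : ℝ) := Nat.cast_nonneg d
      have e1 : (((d : ℕ) : ℝ) - s') * θ₁ ≤ ((d : ℕ) : ℝ) * θ₁ :=
        mul_le_mul_of_nonneg_right (by linarith) hθ₁0.le
      have e2 : ((d : ℕ) : ℝ) * θ₁ ≤ ((d : ℕ) : ℝ) * ((s' - s₀) / (2 * (((d : ℕ) : ℝ) + 1))) :=
        mul_le_mul_of_nonneg_left hδ2 hd0
      have e3 : ((d : ℕ) : ℝ) * ((s' - s₀) / (2 * (((d : ℕ) : ℝ) + 1))) ≤ (s' - s₀) / 2 := by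
        rw [← mul_div_assoc, div_le_div_iff₀ (by positivity) (by norm_num)]
        nlinarith
      have e4 : (s' - s₀) / 2 ≤ (s' - s₀) * (1 - θ₁) := by nlinarith
      have e5 : (s' - s₀) * (1 - θ₁) ≤ (s' - tt) * (1 - θ₁) :=
        mul_le_mul_of_nonneg_right (by linarith) (by linarith)
      linarith
    have hupper : ∀ θ : ℝ, 0 < θ → θ ≤ θ₁ → upperSpectrum θ F ≤ s' := fun θ h h' =>
      aux_upper_le F htt0 (le_of_lt (htts₀.trans hs₀s')) hθ₁0 hθ₁1 hkey hC hmem h h'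
    refine eventually_of_mem (Ioo_mem_nhdsGT_of_mem ⟨le_refl 0, hθ₁0⟩) fun θ hθ => ?_
    exact lt_of_le_of_lt (hupper θ hθ.1 hθ.2.le) hs'c


end
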